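/- Let G be a graph and H an induced subgraph of G. Then for all i, j ≥ 0 and s ≥ 1, the graded Betti numbers satisfy β_{i,j}(S_H/L_H(d)ˢ) ≤ β_{i,j}(S/L_G(d)ˢ). In particular, reg(S/L_G(d)ˢ) ≥ reg(S_H/L_H(d)ˢ). -/

import Mathlib

/-- The Lovász–Saks–Schrijver ideal `L_G(d)` of a graph `G`, in the polynomial ring
`k[x_{iℓ} : i ∈ V, ℓ ∈ [d]]`: it is generated by the forms
`f_e = ∑_{ℓ=1}^d x_{iℓ} x_{jℓ}` for the edges `e = {i,j}` of `G`. -/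
noncomputable def LSS (k : Type*) [Field k] {V : Type*} (G : SimpleGraph V) (d : ℕ) :
    Ideal (MvPolynomial (V × Fin d) k) :=
  Ideal.span {f | ∃ i j : V, G.Adj i j ∧
    f = ∑ ℓ : Fin d, MvPolynomial.X (i, ℓ) * MvPolynomial.X (j, ℓ)}

/-- A minimal graded free resolution of the ideal `I` (as a module) over the standard
graded polynomial ring `S = k[x_i]`:
`⋯ → F₂ → F₁ → F₀ → I → 0`, where `F_i = ⊕_{c} S(−deg i c)` is free of rank `b i`,
the augmentation `F₀ → I ⊆ S` is given by homogeneous generators `g`, the differentials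
are given by matrices `A i : F_{i+1} → F_i` whose entries are homogeneous of the degree
prescribed by the twists, minimality being the requirement that all nonzero entries have
positive degree.  Augmenting by `S → S/I` it also serves as the minimal graded free
resolution of `S/I`, in which `F_i` sits in homological degree `i + 1`. -/
structure MinFreeRes {k : Type*} [Field k] {σ : Type*}
    (I : Ideal (MvPolynomial σ k)) where
  /-- the rank of the `i`-th free module `F_i` -/
  b : ℕ → ℕ
  /-- the twists: `F_i = ⊕_c S(−deg i c)` -/
  deg : (i : ℕ) → Fin (b i) → ℕ
  /-- the augmentation `F₀ → I`, i.e. a minimal system of homogeneous generators of `I` -/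
  g : Fin (b 0) → MvPolynomial σ k
  /-- the differential `F_{i+1} → F_i`, as a matrix acting by `Matrix.mulVec` -/
  A : (i : ℕ) → Matrix (Fin (b i)) (Fin (b (i + 1))) (MvPolynomial σ k)
  g_ne : ∀ c, g c ≠ 0
  g_hom : ∀ c, (g c).IsHomogeneous (deg 0 c)
  g_span : Ideal.span (Set.range g) = I
  /-- graded minimality: every nonzero entry of a differential is homogeneous of the
  degree prescribed by the twists, and that degree is positive -/
  A_hom : ∀ i r c, A i r c ≠ 0 →
    deg i r < deg (i + 1) c ∧ (A i r c).IsHomogeneous (deg (i + 1) c - deg i r)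
  /-- exactness at `F₀` -/
  exact0 : LinearMap.ker
      (Fintype.linearCombination (MvPolynomial σ k) g)
    = LinearMap.range (A 0).mulVecLin
  /-- exactness at `F_{i+1}` -/
  exact : ∀ i, LinearMap.ker (A i).mulVecLin = LinearMap.range (A (i + 1)).mulVecLin


open MvPolynomial

namespace BettiAux

variable {k : Type*} [Field k] {σ : Type*}


/-- homogeneous component of a product with a homogeneous factor -/
lemma hcomp_mul {p : MvPolynomial σ k} {a : ℕ} (hp : p.IsHomogeneous a)
    (q : MvPolynomial σ k) (n : ℕ) :
    homogeneousComponent (a + n) (p * q) = p * homogeneousComponent n q := by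
  conv_lhs => rw [← sum_homogeneousComponent q]
  rw [Finset.mul_sum, map_sum]
  have h1 : ∀ m : ℕ, homogeneousComponent (a + n) (p * homogeneousComponent m q)
      = if m = n then p * homogeneousComponent m q else 0 := by
    intro m
    rw [homogeneousComponent_of_mem (hp.mul (homogeneousComponent_isHomogeneous m q))]
    exact if_congr (by omega) rfl rfl
  simp_rw [h1]
  rw [Finset.sum_ite_eq' (Finset.range (q.totalDegree + 1))]
  split_ifs with h
  · rfl
  · rw [homogeneousComponent_eq_zero _ _ (by simpa using h), mul_zero]

lemma hcomp_mul_lt {p : MvPolynomial σ k} {a : ℕ} (hp : p.IsHomogeneous a)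
    (q : MvPolynomial σ k) {n : ℕ} (hn : n < a) :
    homogeneousComponent n (p * q) = 0 := by
  conv_lhs => rw [← sum_homogeneousComponent q]
  rw [Finset.mul_sum, map_sum]
  apply Finset.sum_eq_zero
  intro m _
  rw [homogeneousComponent_of_mem (hp.mul (homogeneousComponent_isHomogeneous m q))]
  exact if_neg (by omega)

lemma constCoeff_of_pos {p : MvPolynomial σ k} {n : ℕ} (hp : p.IsHomogeneous n)
    (hn : 0 < n) : constantCoeff p = 0 := by
  rw [show (constantCoeff p : k) = coeff 0 p from rfl]
  exact hp.coeff_eq_zero (by simp [map_zero]; omega)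

lemma homog_zero_of_constCoeff {p : MvPolynomial σ k} {n : ℕ} (hp : p.IsHomogeneous n)
    (h : constantCoeff p ≠ 0) : n = 0 := by
  have h0 : coeff 0 p ≠ 0 := h
  have := hp h0
  simpa using this.symm

lemma eq_C_of_homog_zero [DecidableEq σ] {p : MvPolynomial σ k} (hp : p.IsHomogeneous 0) :
    p = C (constantCoeff p) := by
  ext d
  rw [coeff_C]
  split_ifs with h
  · subst h; rfl
  · exact hp.coeff_eq_zero (by
      simp only [ne_eq, Finsupp.degree_eq_zero_iff]
      exact fun hc => h hc.symm)



/-- graded vector with twist pattern `D` and total degree `t` -/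
def HV {ρ : Type*} (D : ρ → ℕ) (t : ℕ) (w : ρ → MvPolynomial σ k) : Prop :=
  ∀ r, (D r ≤ t ∧ (w r).IsHomogeneous (t - D r)) ∨ w r = 0

/-- graded matrix with twist patterns `Dr` (rows) and `Dc` (columns) -/
def GM {ρ χ : Type*} (Dr : ρ → ℕ) (Dc : χ → ℕ) (M : Matrix ρ χ (MvPolynomial σ k)) : Prop :=
  ∀ r c, (Dr r ≤ Dc c ∧ (M r c).IsHomogeneous (Dc c - Dr r)) ∨ M r c = 0

lemma GM.col {ρ χ : Type*} {Dr : ρ → ℕ} {Dc : χ → ℕ} {M : Matrix ρ χ (MvPolynomial σ k)}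
    (h : GM Dr Dc M) (c : χ) : HV Dr (Dc c) (fun r => M r c) :=
  fun r => h r c

lemma GM.mulVec_hv {ρ χ : Type*} [Fintype χ] {Dr : ρ → ℕ} {Dc : χ → ℕ}
    {M : Matrix ρ χ (MvPolynomial σ k)} (hM : GM Dr Dc M) {t : ℕ}
    {v : χ → MvPolynomial σ k} (hv : HV Dc t v) : HV Dr t (M.mulVec v) := by
  intro r
  by_cases hr : Dr r ≤ t
  · left
    refine ⟨hr, ?_⟩
    rw [Matrix.mulVec]
    apply IsHomogeneous.sum
    intro c _
    dsimp only
    rcases hM r c with ⟨hle, hhom⟩ | hz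
    · rcases hv c with ⟨hle', hhom'⟩ | hz'
      · have := hhom.mul hhom'
        rwa [show Dc c - Dr r + (t - Dc c) = t - Dr r by omega] at this
      · rw [hz', mul_zero]
        exact isHomogeneous_zero _ _ _
    · rw [hz, zero_mul]
      exact isHomogeneous_zero _ _ _
  · right
    rw [Matrix.mulVec]
    apply Finset.sum_eq_zero
    intro c _
    dsimp only
    rcases hM r c with ⟨hle, _⟩ | hz
    · rcases hv c with ⟨hle', _⟩ | hz'
      · omega
      · rw [hz', mul_zero]
    · rw [hz, zero_mul]

lemma GM.mul {ρ χ ξ : Type*} [Fintype χ] {D1 : ρ → ℕ} {D2 : χ → ℕ} {D3 : ξ → ℕ}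
    {M : Matrix ρ χ (MvPolynomial σ k)} {N : Matrix χ ξ (MvPolynomial σ k)}
    (hM : GM D1 D2 M) (hN : GM D2 D3 N) : GM D1 D3 (M * N) := by
  intro r c
  by_cases hrc : D1 r ≤ D3 c
  · left
    refine ⟨hrc, ?_⟩
    rw [Matrix.mul_apply]
    apply IsHomogeneous.sum
    intro b _
    rcases hM r b with ⟨h1, hh1⟩ | hz1
    · rcases hN b c with ⟨h2, hh2⟩ | hz2
      · have := hh1.mul hh2
        rwa [show D2 b - D1 r + (D3 c - D2 b) = D3 c - D1 r by omega] at this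
      · rw [hz2, mul_zero]; exact isHomogeneous_zero _ _ _
    · rw [hz1, zero_mul]; exact isHomogeneous_zero _ _ _
  · right
    rw [Matrix.mul_apply]
    apply Finset.sum_eq_zero
    intro b _
    rcases hM r b with ⟨h1, _⟩ | hz1
    · rcases hN b c with ⟨h2, _⟩ | hz2
      · omega
      · rw [hz2, mul_zero]
    · rw [hz1, zero_mul]

lemma GM.map {τ : Type*} {ρ χ : Type*} {Dr : ρ → ℕ} {Dc : χ → ℕ}
    {M : Matrix ρ χ (MvPolynomial σ k)} (hM : GM Dr Dc M)
    (f : MvPolynomial σ k →+* MvPolynomial τ k)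
    (hf : ∀ (n : ℕ) (p : MvPolynomial σ k), p.IsHomogeneous n → (f p).IsHomogeneous n) :
    GM Dr Dc (M.map f) := by
  intro r c
  rcases hM r c with ⟨hle, hhom⟩ | hz
  · exact Or.inl ⟨hle, hf _ _ hhom⟩
  · right
    simp [Matrix.map_apply, hz]

/-- extraction of a graded solution of a linear system out of an arbitrary one -/
lemma extract {ρ χ : Type*} [Fintype χ] {Dr : ρ → ℕ} {Dc : χ → ℕ}
    {M : Matrix ρ χ (MvPolynomial σ k)} (hM : GM Dr Dc M)
    {t : ℕ} {w : ρ → MvPolynomial σ k} (hw : HV Dr t w)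
    {v : χ → MvPolynomial σ k} (hv : M.mulVec v = w) :
    ∃ v', M.mulVec v' = w ∧ HV Dc t v' := by
  classical
  refine ⟨fun c => if Dc c ≤ t then homogeneousComponent (t - Dc c) (v c) else 0, ?_, ?_⟩
  · funext r
    by_cases hr : Dr r ≤ t
    · have hwr : homogeneousComponent (t - Dr r) (w r) = w r := by
        rcases hw r with ⟨_, hhom⟩ | hz
        · rw [homogeneousComponent_of_mem hhom, if_pos rfl]
        · rw [hz, map_zero]
      calc (M.mulVec fun c => if Dc c ≤ t then homogeneousComponent (t - Dc c) (v c) else 0) r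
          = ∑ c, homogeneousComponent (t - Dr r) (M r c * v c) := by
            rw [Matrix.mulVec]
            apply Finset.sum_congr rfl
            intro c _
            dsimp only
            rcases hM r c with ⟨hle, hhom⟩ | hz
            · by_cases hc : Dc c ≤ t
              · rw [if_pos hc,
                  show t - Dr r = (Dc c - Dr r) + (t - Dc c) by omega, hcomp_mul hhom]
              · rw [if_neg hc, mul_zero, hcomp_mul_lt hhom _ (by omega)]
            · rw [hz, zero_mul, zero_mul, map_zero]
        _ = homogeneousComponent (t - Dr r) (∑ c, M r c * v c) := by rw [map_sum]
        _ = homogeneousComponent (t - Dr r) ((M.mulVec v) r) := rfl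
        _ = w r := by rw [hv, hwr]
    · have hwr : w r = 0 := by
        rcases hw r with ⟨hle, _⟩ | hz
        · omega
        · exact hz
      rw [hwr, Matrix.mulVec]
      apply Finset.sum_eq_zero
      intro c _
      dsimp only
      rcases hM r c with ⟨hle, _⟩ | hz
      · rw [if_neg (show ¬ Dc c ≤ t by omega), mul_zero]
      · rw [hz, zero_mul]
  · intro c
    by_cases hc : Dc c ≤ t
    · left
      exact ⟨hc, by dsimp only; rw [if_pos hc]; exact homogeneousComponent_isHomogeneous _ _⟩
    · right
      dsimp only
      rw [if_neg hc]



variable {k : Type*} [Field k] {σ : Type*} {I : Ideal (MvPolynomial σ k)}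

lemma col_mul {n p q : Type*} [Fintype p] (M : Matrix n p (MvPolynomial σ k))
    (B : Matrix p q (MvPolynomial σ k)) (c : q) :
    (fun r => (M * B) r c) = M.mulVec (fun b => B b c) := by
  funext r
  simp [Matrix.mul_apply, Matrix.mulVec, dotProduct]

lemma sum_mulVec_mul {n p : Type*} [Fintype n] [Fintype p]
    (M : Matrix n p (MvPolynomial σ k)) (x : p → MvPolynomial σ k)
    (g : n → MvPolynomial σ k) :
    ∑ r, (M.mulVec x) r * g r = ∑ b, x b * (∑ r, M r b * g r) := by
  simp only [Matrix.mulVec, dotProduct, Finset.sum_mul, Finset.mul_sum]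
  rw [Finset.sum_comm]
  refine Finset.sum_congr rfl fun b _ => Finset.sum_congr rfl fun r _ => by ring

lemma gm_A (R : MinFreeRes I) (i : ℕ) : GM (R.deg i) (R.deg (i+1)) (R.A i) := by
  intro r c
  by_cases h : R.A i r c = 0
  · exact Or.inr h
  · exact Or.inl ⟨(R.A_hom i r c h).1.le, (R.A_hom i r c h).2⟩

lemma col_mem_range {n p : Type*} [Fintype p] [DecidableEq p]
    (M : Matrix n p (MvPolynomial σ k)) (c : p) :
    (fun r => M r c) ∈ LinearMap.range M.mulVecLin := by
  refine ⟨Pi.single c 1, ?_⟩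
  funext r
  simp [Matrix.mulVecLin_apply, Matrix.mulVec_single]

lemma A_mul_A (R : MinFreeRes I) (i : ℕ) : R.A i * R.A (i+1) = 0 := by
  refine Matrix.ext fun r c => ?_
  have hcol := col_mem_range (R.A (i+1)) c
  rw [← R.exact i] at hcol
  have h2 : (R.A i).mulVec (fun b => R.A (i+1) b c) = 0 := hcol
  have h3 := congrFun h2 r
  simpa [Matrix.mul_apply, Matrix.mulVec, dotProduct] using h3

theorem lift_exists (R : MinFreeRes I) (m : ℕ → ℕ) (E : (i : ℕ) → Fin (m i) → ℕ)
    (B : (i : ℕ) → Matrix (Fin (m i)) (Fin (m (i+1))) (MvPolynomial σ k))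
    (h : Fin (m 0) → MvPolynomial σ k)
    (hB : ∀ i, GM (E i) (E (i+1)) (B i))
    (hmem : ∀ c, h c ∈ I)
    (hhom : ∀ c, (h c).IsHomogeneous (E 0 c))
    (hcomp0 : ∀ c, ∑ b, B 0 b c * h b = 0)
    (hcomp : ∀ i, B i * B (i+1) = 0) :
    ∃ Φ : (i : ℕ) → Matrix (Fin (R.b i)) (Fin (m i)) (MvPolynomial σ k),
      (∀ i, GM (R.deg i) (E i) (Φ i)) ∧
      (∀ c, ∑ r, Φ 0 r c * R.g r = h c) ∧
      (∀ i, R.A i * Φ (i+1) = Φ i * B i) := by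
  classical
  let T : ℕ → Type _ := fun i => Matrix (Fin (R.b i)) (Fin (m i)) (MvPolynomial σ k)
  let KC : ∀ i, T i → Prop := fun i M =>
    ∀ c : Fin (m (i+1)), (fun r => (M * B i) r c) ∈ LinearMap.range (R.A i).mulVecLin
  -- base matrix
  have h0 : ∃ M : T 0, GM (R.deg 0) (E 0) M ∧ (∀ c, ∑ r, M r c * R.g r = h c) := by
    have hcol : ∀ c : Fin (m 0), ∃ col : Fin (R.b 0) → MvPolynomial σ k,
        ((Matrix.of fun (_ : Unit) r => R.g r).mulVec col = fun _ => h c) ∧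
        HV (R.deg 0) (E 0 c) col := by
      intro c
      have hmem' : h c ∈ Ideal.span (Set.range R.g) := by rw [R.g_span]; exact hmem c
      rw [Ideal.span, Submodule.mem_span_range_iff_exists_fun] at hmem'
      obtain ⟨u, hu⟩ := hmem'
      have hGM : GM (fun _ : Unit => 0) (R.deg 0)
          (Matrix.of fun (_ : Unit) r => R.g r) := by
        intro _ r
        exact Or.inl ⟨Nat.zero_le _, by simpa using R.g_hom r⟩
      have hw : HV (fun _ : Unit => 0) (E 0 c) (fun _ => h c) := fun _ =>
        Or.inl ⟨Nat.zero_le _, by simpa using hhom c⟩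
      refine extract hGM hw (v := u) ?_
      funext x
      simpa [Matrix.mulVec, dotProduct, mul_comm, smul_eq_mul] using hu
    choose col hcol1 hcol2 using hcol
    refine ⟨Matrix.of fun r c => col c r, fun r c => hcol2 c r, fun c => ?_⟩
    have h1 := congrFun (hcol1 c) ()
    simp only [Matrix.mulVec, dotProduct, Matrix.of_apply] at h1
    calc ∑ r, (Matrix.of fun r c => col c r) r c * R.g r
        = ∑ r, R.g r * col c r := by
          refine Finset.sum_congr rfl fun r _ => by simp [Matrix.of_apply, mul_comm]
      _ = h c := h1
  have hKC0 : ∀ M : T 0, (∀ c, ∑ r, M r c * R.g r = h c) → KC 0 M := by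
    intro M hM c
    rw [← R.exact0]
    refine LinearMap.mem_ker.mpr ?_
    rw [Fintype.linearCombination_apply]
    have hc1 : (fun r => (M * B 0) r c) = M.mulVec (fun b => B 0 b c) := col_mul M (B 0) c
    calc ∑ r, (fun r => (M * B 0) r c) r • R.g r
        = ∑ r, (M.mulVec (fun b => B 0 b c)) r * R.g r := by
          rw [hc1]; exact Finset.sum_congr rfl fun r _ => by rw [smul_eq_mul]
      _ = ∑ b, B 0 b c * (∑ r, M r b * R.g r) := sum_mulVec_mul M _ R.g
      _ = ∑ b, B 0 b c * h b := by
          refine Finset.sum_congr rfl fun b _ => by rw [hM b]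
      _ = 0 := hcomp0 c
  -- induction step
  have hstep : ∀ i (M : T i), GM (R.deg i) (E i) M → KC i M →
      ∃ M' : T (i+1), GM (R.deg (i+1)) (E (i+1)) M' ∧ KC (i+1) M' ∧
        R.A i * M' = M * B i := by
    intro i M hGMi hKCi
    have hcol : ∀ c : Fin (m (i+1)), ∃ colv,
        (R.A i).mulVec colv = (fun r => (M * B i) r c) ∧
        HV (R.deg (i+1)) (E (i+1) c) colv := by
      intro c
      obtain ⟨v, hv⟩ := hKCi c
      refine extract (gm_A R i) ?_ (v := v) hv
      rw [col_mul M (B i) c]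
      exact hGMi.mulVec_hv ((hB i).col c)
    choose colv hcol1 hcol2 using hcol
    have hsq : R.A i * (Matrix.of fun r c => colv c r) = M * B i := by
      refine Matrix.ext fun r c => ?_
      have h1 := congrFun (hcol1 c) r
      simpa [Matrix.mul_apply, Matrix.mulVec, dotProduct] using h1
    refine ⟨Matrix.of fun r c => colv c r, fun r c => hcol2 c r, ?_, hsq⟩
    intro c
    rw [← R.exact i]
    refine LinearMap.mem_ker.mpr ?_
    rw [Matrix.mulVecLin_apply, col_mul _ (B (i+1)) c, Matrix.mulVec_mulVec, hsq,
      ← Matrix.mulVec_mulVec, ← col_mul (B i) (B (i+1)) c, hcomp i]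
    funext r
    simp [Matrix.mulVec, dotProduct]
  choose stepf hstep1 hstep2 hstep3 using hstep
  obtain ⟨M0, hGM0, haug0⟩ := h0
  have hKC0' : KC 0 M0 := hKC0 M0 haug0
  let F : ∀ i, Σ' (M : T i), GM (R.deg i) (E i) M ∧ KC i M := fun i =>
    Nat.rec ⟨M0, hGM0, hKC0'⟩ (fun n prev =>
      ⟨stepf n prev.1 prev.2.1 prev.2.2,
       hstep1 n prev.1 prev.2.1 prev.2.2, hstep2 n prev.1 prev.2.1 prev.2.2⟩) i
  exact ⟨fun i => (F i).1, fun i => (F i).2.1, haug0,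
    fun i => hstep3 i (F i).1 (F i).2.1 (F i).2.2⟩


lemma det_graded {n' : Type*} [Fintype n'] [DecidableEq n'] {D : n' → ℕ}
    {M : Matrix n' n' (MvPolynomial σ k)} (hM : GM D D M) :
    M.det.IsHomogeneous 0 := by
  rw [Matrix.det_apply]
  apply IsHomogeneous.sum
  intro τ _
  have hprod : (∏ i, M (τ i) i).IsHomogeneous 0 := by
    by_cases hz : ∀ i, M (τ i) i ≠ 0
    · have hle : ∀ i, D (τ i) ≤ D i := fun i => ((hM (τ i) i).resolve_right (hz i)).1
      have hsum : ∑ i, D (τ i) = ∑ i, D i := Equiv.sum_comp τ D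
      have heq : ∀ i, D (τ i) = D i := by
        intro i
        by_contra hne
        have hlt : D (τ i) < D i := lt_of_le_of_ne (hle i) hne
        have := Finset.sum_lt_sum (fun j (_ : j ∈ Finset.univ) => hle j)
          ⟨i, Finset.mem_univ i, hlt⟩
        omega
      have h0 : ∀ i ∈ Finset.univ, (M (τ i) i).IsHomogeneous 0 := by
        intro i _
        have h2 := ((hM (τ i) i).resolve_right (hz i)).2
        rwa [heq i, Nat.sub_self] at h2
      simpa using IsHomogeneous.prod Finset.univ _ (fun _ => 0) h0
    · push_neg at hz
      obtain ⟨i, hi⟩ := hz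
      have hzz : (∏ x : n', M (τ x) x) = 0 :=
        Finset.prod_eq_zero (Finset.mem_univ i) hi
      rw [hzz]
      exact isHomogeneous_zero _ _ _
  rw [Units.smul_def]
  have hmem := (mem_homogeneousSubmodule _ _).mpr hprod
  exact (mem_homogeneousSubmodule _ _).mp (zsmul_mem hmem _)

lemma det_eq_C {n' : Type*} [Fintype n'] [DecidableEq n'] {D : n' → ℕ}
    {M : Matrix n' n' (MvPolynomial σ k)} (hM : GM D D M) :
    M.det = C ((M.map (constantCoeff : MvPolynomial σ k →+* k)).det) := by
  classical
  have h1 := eq_C_of_homog_zero (det_graded hM)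
  rw [h1, RingHom.map_det]
  simp [RingHom.mapMatrix_apply]

theorem theta_inj (R : MinFreeRes I)
    (θ : ∀ i, Matrix (Fin (R.b i)) (Fin (R.b i)) (MvPolynomial σ k))
    (hGM : ∀ i, GM (R.deg i) (R.deg i) (θ i))
    (haug : ∀ c, ∑ r, θ 0 r c * R.g r = R.g c)
    (hsq : ∀ i, R.A i * θ (i+1) = θ i * R.A i) :
    ∀ (i : ℕ) (v : Fin (R.b i) → k),
      ((θ i).map (constantCoeff : MvPolynomial σ k →+* k)).mulVec v = 0 → v = 0 := by
  classical
  have hAconst : ∀ i r c, constantCoeff (R.A i r c) = 0 := by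
    intro i r c
    by_cases h : R.A i r c = 0
    · rw [h]; simp
    · exact constCoeff_of_pos (R.A_hom i r c h).2
        (by have := (R.A_hom i r c h).1; omega)
  have haugL : ∀ x : Fin (R.b 0) → (MvPolynomial σ k),
      ∑ r, ((θ 0).mulVec x) r * R.g r = ∑ r, x r * R.g r := by
    intro x
    rw [sum_mulVec_mul (θ 0) x R.g]
    exact Finset.sum_congr rfl fun b _ => by rw [haug b]
  let KK : ∀ i, Submodule (MvPolynomial σ k) (Fin (R.b i) → (MvPolynomial σ k)) := fun i =>
    Nat.casesOn i
      (LinearMap.ker (Fintype.linearCombination (MvPolynomial σ k) R.g))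
      (fun n => LinearMap.ker (R.A n).mulVecLin)
  have hKKrange : ∀ i, LinearMap.range (R.A i).mulVecLin = KK i := by
    intro i
    cases i with
    | zero => exact R.exact0.symm
    | succ n => exact (R.exact n).symm
  -- base : the constant part of θ 0 is the identity
  have hbase : (θ 0).map (constantCoeff : (MvPolynomial σ k) →+* k) = 1 := by
    refine Matrix.ext fun r c => ?_
    have hmem : (fun r => θ 0 r c) - Pi.single c 1
        ∈ LinearMap.range (R.A 0).mulVecLin := by
      rw [← R.exact0]
      refine LinearMap.mem_ker.mpr ?_
      rw [map_sub]
      have e1 : Fintype.linearCombination (MvPolynomial σ k) R.g (fun r => θ 0 r c) = R.g c := by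
        rw [Fintype.linearCombination_apply]
        calc ∑ r, θ 0 r c • R.g r = ∑ r, θ 0 r c * R.g r := by
              exact Finset.sum_congr rfl fun r _ => by rw [smul_eq_mul]
          _ = R.g c := haug c
      have e2 : Fintype.linearCombination (MvPolynomial σ k) R.g (Pi.single c 1) = R.g c := by
        rw [Fintype.linearCombination_apply_single, one_smul]
      rw [e1, e2, sub_self]
    obtain ⟨y, hy⟩ := hmem
    have hyr := congrFun hy r
    simp only [Matrix.mulVecLin_apply, Pi.sub_apply] at hyr
    have hconst := congrArg constantCoeff hyr
    rw [map_sub] at hconst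
    have hL : constantCoeff ((R.A 0).mulVec y r) = 0 := by
      rw [Matrix.mulVec, dotProduct, map_sum]
      refine Finset.sum_eq_zero fun j _ => ?_
      rw [map_mul, hAconst 0 r j, zero_mul]
    rw [hL] at hconst
    have hsingle : constantCoeff ((Pi.single c (1 : MvPolynomial σ k) : Fin (R.b 0) → MvPolynomial σ k) r) = if r = c then 1 else 0 := by
      rw [Pi.single_apply]
      split_ifs <;> simp
    rw [hsingle] at hconst
    rw [Matrix.map_apply, Matrix.one_apply]
    exact eq_of_sub_eq_zero hconst.symm
  have unit0 : IsUnit (θ 0).det := by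
    rw [det_eq_C (hGM 0), hbase]
    simp
  -- key step : injectivity of the constant part at level i+1 from unit at level i
  have key : ∀ i, IsUnit (θ i).det → (∀ z ∈ KK i, ((θ i)⁻¹).mulVec z ∈ KK i) →
      ∀ v : Fin (R.b (i+1)) → k,
        ((θ (i+1)).map (constantCoeff : (MvPolynomial σ k) →+* k)).mulVec v = 0 → v = 0 := by
    intro i hU hMT v hv
    set mI : Ideal (MvPolynomial σ k) := RingHom.ker (constantCoeff : (MvPolynomial σ k) →+* k) with hmI
    set K : Submodule (MvPolynomial σ k) (Fin (R.b i) → (MvPolynomial σ k)) := LinearMap.range (R.A i).mulVecLin with hK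
    set V : Fin (R.b (i+1)) → (MvPolynomial σ k) := fun c => C (v c) with hV
    set w : Fin (R.b (i+1)) → (MvPolynomial σ k) := (θ (i+1)).mulVec V with hw
    have hεw : ∀ r, constantCoeff (w r) = 0 := by
      intro r
      have h1 : constantCoeff (w r)
          = (((θ (i+1)).map (constantCoeff : (MvPolynomial σ k) →+* k)).mulVec v) r := by
        rw [hw, Matrix.mulVec, Matrix.mulVec, dotProduct, dotProduct, map_sum]
        refine Finset.sum_congr rfl fun c _ => ?_
        rw [map_mul, Matrix.map_apply, hV]
        simp
      rw [h1, hv]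
      rfl
    have hw_mem : ∀ r, w r ∈ mI := fun r => RingHom.mem_ker.mpr (hεw r)
    have h1 : (R.A i).mulVec w ∈ mI • K := by
      have hdec : w = ∑ c, w c • (Pi.single c (1 : MvPolynomial σ k) : Fin (R.b (i+1)) → MvPolynomial σ k) := by
        funext r
        rw [Finset.sum_apply]
        simp [Pi.single_apply, Finset.sum_ite_eq, mul_ite, mul_one, mul_zero]
      have : (R.A i).mulVec w = (R.A i).mulVecLin w := rfl
      rw [this, hdec, map_sum]
      refine Submodule.sum_mem _ fun c _ => ?_
      rw [map_smul]
      exact Submodule.smul_mem_smul (hw_mem c) ⟨Pi.single c 1, rfl⟩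
    have h2 : (θ i).mulVec ((R.A i).mulVec V) = (R.A i).mulVec w := by
      rw [Matrix.mulVec_mulVec, Matrix.mulVec_mulVec, ← hsq i, ← Matrix.mulVec_mulVec, ← hw]
    have h3 : (R.A i).mulVec V ∈ mI • K := by
      have hcancel : (R.A i).mulVec V = ((θ i)⁻¹).mulVec ((R.A i).mulVec w) := by
        rw [← h2, Matrix.mulVec_mulVec, Matrix.nonsing_inv_mul _ hU, Matrix.one_mulVec]
      rw [hcancel]
      have himg : Submodule.map ((θ i)⁻¹).mulVecLin (mI • K) ≤ mI • K := by
        rw [Submodule.map_smul'']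
        refine smul_mono_right _ ?_
        rintro x hx
        obtain ⟨z, hz, rfl⟩ := Submodule.mem_map.mp hx
        have hzK : z ∈ KK i := by rw [← hKKrange i]; exact hz
        have := hMT z hzK
        rw [← hKKrange i] at this
        exact this
      exact himg (Submodule.mem_map_of_mem h1)
    have h4 : mI • K = Submodule.map (R.A i).mulVecLin
        (mI • (⊤ : Submodule (MvPolynomial σ k) (Fin (R.b (i+1)) → (MvPolynomial σ k)))) := by
      rw [Submodule.map_smul'', Submodule.map_top]
    rw [h4] at h3
    obtain ⟨z, hz_mem, hz⟩ := Submodule.mem_map.mp h3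
    have h5 : ∀ c, z c ∈ mI := by
      have hgen : ∀ y ∈ (mI • (⊤ : Submodule (MvPolynomial σ k) (Fin (R.b (i+1)) → (MvPolynomial σ k)))),
          ∀ c, y c ∈ mI := by
        intro y hy
        refine Submodule.smul_induction_on hy ?_ ?_
        · intro a ha x _ c
          have hax : (a • x) c = a * x c := rfl
          rw [hax]
          exact Ideal.mul_mem_right _ _ ha
        · intro x y hx hy c
          exact Submodule.add_mem _ (hx c) (hy c)
      exact hgen z hz_mem
    have h6 : V - z ∈ LinearMap.ker (R.A i).mulVecLin := by
      refine LinearMap.mem_ker.mpr ?_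
      rw [map_sub, hz]
      simp [Matrix.mulVecLin_apply]
    rw [R.exact i] at h6
    obtain ⟨y, hy⟩ := h6
    funext c
    have hyc := congrFun hy c
    simp only [Matrix.mulVecLin_apply, Pi.sub_apply] at hyc
    have hconst := congrArg constantCoeff hyc
    have hL : constantCoeff ((R.A (i+1)).mulVec y c) = 0 := by
      rw [Matrix.mulVec, dotProduct, map_sum]
      exact Finset.sum_eq_zero fun j _ => by rw [map_mul, hAconst (i+1) c j, zero_mul]
    rw [hL, map_sub] at hconst
    have hz0 : constantCoeff (z c) = 0 := RingHom.mem_ker.mp (h5 c)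
    have hVc : constantCoeff (V c) = v c := by
      have : V c = C (v c) := by rw [hV]
      rw [this, constantCoeff_C]
    rw [hz0, hVc, sub_zero] at hconst
    exact hconst.symm
  -- the full induction
  have main : ∀ i, IsUnit (θ i).det ∧ (∀ z ∈ KK i, ((θ i)⁻¹).mulVec z ∈ KK i) := by
    intro i
    induction i with
    | zero =>
      refine ⟨unit0, ?_⟩
      intro z hz
      have hz0 : Fintype.linearCombination (MvPolynomial σ k) R.g z = 0 := hz
      show ((θ 0)⁻¹).mulVec z ∈ KK 0
      refine LinearMap.mem_ker.mpr ?_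
      have hc : (θ 0).mulVec (((θ 0)⁻¹).mulVec z) = z := by
        rw [Matrix.mulVec_mulVec, Matrix.mul_nonsing_inv _ unit0, Matrix.one_mulVec]
      have h7 := haugL (((θ 0)⁻¹).mulVec z)
      rw [hc] at h7
      rw [Fintype.linearCombination_apply] at hz0 ⊢
      simp_rw [smul_eq_mul] at hz0 ⊢
      rw [← h7]
      exact hz0
    | succ n ih =>
      have hinjv := key n ih.1 ih.2
      have hdet : IsUnit ((θ (n+1)).map (constantCoeff : (MvPolynomial σ k) →+* k)).det := by
        have hinj : Function.Injective
            (((θ (n+1)).map (constantCoeff : (MvPolynomial σ k) →+* k)).mulVec) := by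
          intro x y hxy
          have := hinjv (x - y) (by rw [Matrix.mulVec_sub, hxy, sub_self])
          exact sub_eq_zero.mp this
        exact (Matrix.isUnit_iff_isUnit_det _).mp
          (Matrix.mulVec_injective_iff_isUnit.mp hinj)
      have hdet' : IsUnit (θ (n+1)).det := by
        rw [det_eq_C (hGM (n+1))]
        exact hdet.map (C : k →+* (MvPolynomial σ k))
      refine ⟨hdet', ?_⟩
      intro z hz
      have hcomm : R.A n * (θ (n+1))⁻¹ = (θ n)⁻¹ * R.A n := by
        calc R.A n * (θ (n+1))⁻¹
            = ((θ n)⁻¹ * θ n) * (R.A n * (θ (n+1))⁻¹) := by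
              rw [Matrix.nonsing_inv_mul _ ih.1, Matrix.one_mul]
          _ = (θ n)⁻¹ * ((θ n * R.A n) * (θ (n+1))⁻¹) := by
              simp only [Matrix.mul_assoc]
          _ = (θ n)⁻¹ * ((R.A n * θ (n+1)) * (θ (n+1))⁻¹) := by rw [← hsq n]
          _ = (θ n)⁻¹ * R.A n := by
              simp only [Matrix.mul_assoc, Matrix.mul_nonsing_inv _ hdet', Matrix.mul_one]
      show ((θ (n+1))⁻¹).mulVec z ∈ KK (n+1)
      refine LinearMap.mem_ker.mpr ?_
      have hz0 : (R.A n).mulVecLin z = 0 := hz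
      rw [Matrix.mulVecLin_apply] at hz0 ⊢
      rw [Matrix.mulVec_mulVec, hcomm, ← Matrix.mulVec_mulVec, hz0, Matrix.mulVec_zero]
  intro i v hv
  cases i with
  | zero =>
    rw [hbase, Matrix.one_mulVec] at hv
    exact hv
  | succ n => exact key n (main n).1 (main n).2 v hv

lemma card_le_of_block {nH nG : Type*} [Fintype nH] [Fintype nG]
    (DH : nH → ℕ) (DG : nG → ℕ)
    (P : Matrix nG nH k) (Q : Matrix nH nG k)
    (hP : ∀ r c, P r c ≠ 0 → DG r = DH c)
    (hQ : ∀ r c, Q r c ≠ 0 → DH r = DG c)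
    (hinj : ∀ v : nH → k, (Q * P).mulVec v = 0 → v = 0)
    (j : ℕ) :
    Fintype.card {c : nH // DH c = j} ≤ Fintype.card {r : nG // DG r = j} := by
  classical
  set P' : Matrix {r : nG // DG r = j} {c : nH // DH c = j} k :=
    P.submatrix Subtype.val Subtype.val with hP'
  have hPinj : ∀ x : {c : nH // DH c = j} → k, P'.mulVec x = 0 → x = 0 := by
    intro x hx
    set xt : nH → k := fun c => if h : DH c = j then x ⟨c, h⟩ else 0 with hxt
    have hPx : P.mulVec xt = 0 := by
      funext r
      simp only [Pi.zero_apply]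
      rw [Matrix.mulVec, dotProduct]
      by_cases hr : DG r = j
      · have h1 := congrFun hx ⟨r, hr⟩
        rw [Matrix.mulVec, dotProduct] at h1
        have h2 : ∑ c, P r c * xt c
            = ∑ c : {c : nH // DH c = j}, P r c.val * xt c.val := by
          rw [← Finset.sum_filter_of_ne (p := fun c => DH c = j)
            (fun c _ hne => by
              by_contra hc
              exact hne (by rw [hxt]; simp only [dif_neg hc, mul_zero]))]
          exact Finset.sum_subtype _ (by simp) _
        rw [h2]
        rw [show (0 : k) = ∑ c : {c : nH // DH c = j}, P' ⟨r, hr⟩ c * x c from h1.symm]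
        refine Finset.sum_congr rfl fun c _ => ?_
        rw [hP', Matrix.submatrix_apply]
        congr 1
        rw [hxt]
        simp [c.2]
      · refine Finset.sum_eq_zero fun c _ => ?_
        by_cases hPc : P r c = 0
        · rw [hPc, zero_mul]
        · have hd := hP r c hPc
          have hxc : xt c = 0 := by
            rw [hxt]
            exact dif_neg (by omega)
          rw [hxc, mul_zero]
    have hQP : (Q * P).mulVec xt = 0 := by
      rw [← Matrix.mulVec_mulVec, hPx, Matrix.mulVec_zero]
    have hxt0 := hinj xt hQP
    funext c
    have h3 := congrFun hxt0 c.val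
    rw [hxt] at h3
    simp only [dif_pos c.2] at h3
    rw [show (⟨c.val, c.2⟩ : {c : nH // DH c = j}) = c from Subtype.ext rfl] at h3
    exact h3
  have hlinj : Function.Injective P'.mulVecLin := by
    rw [← LinearMap.ker_eq_bot]
    exact LinearMap.ker_eq_bot'.mpr fun m hm => hPinj m hm
  have hfr := LinearMap.finrank_le_finrank_of_injective hlinj
  rwa [Module.finrank_pi, Module.finrank_pi] at hfr

end BettiAux

namespace BettiAux

variable (k : Type*) [Field k] {V : Type*} (U : Set V) (d : ℕ)

noncomputable def ιR : MvPolynomial (↥U × Fin d) k →+* MvPolynomial (V × Fin d) k :=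
  (rename (fun p : ↥U × Fin d => ((p.1 : V), p.2))).toRingHom

noncomputable def πfun : V × Fin d → MvPolynomial (↥U × Fin d) k := fun p =>
  @dite _ (p.1 ∈ U) (Classical.propDecidable _)
    (fun h => X (⟨p.1, h⟩, p.2)) (fun _ => 0)

noncomputable def πR : MvPolynomial (V × Fin d) k →+* MvPolynomial (↥U × Fin d) k :=
  (aeval (πfun k U d)).toRingHom

lemma πR_X_mem {i : V} (hi : i ∈ U) (ℓ : Fin d) :
    πR k U d (X (i, ℓ)) = X ((⟨i, hi⟩ : U), ℓ) := by
  simp only [πR, AlgHom.toRingHom_eq_coe, RingHom.coe_coe, aeval_X, πfun]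
  rw [dif_pos hi]

lemma πR_X_not_mem {i : V} (hi : i ∉ U) (ℓ : Fin d) : πR k U d (X (i, ℓ)) = 0 := by
  simp only [πR, AlgHom.toRingHom_eq_coe, RingHom.coe_coe, aeval_X, πfun]
  rw [dif_neg hi]

lemma πR_ιR (p : MvPolynomial (↥U × Fin d) k) : πR k U d (ιR k U d p) = p := by
  simp only [ιR, πR, AlgHom.toRingHom_eq_coe, RingHom.coe_coe]
  rw [aeval_rename]
  have hfn : (πfun k U d ∘ (fun p : ↥U × Fin d => ((p.1 : V), p.2)))
      = (X : ↥U × Fin d → MvPolynomial (↥U × Fin d) k) := by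
    funext q
    simp only [Function.comp, πfun]
    rw [dif_pos q.1.2]
  rw [hfn]
  exact aeval_X_left_apply p

lemma ιR_hom {n : ℕ} {p : MvPolynomial (↥U × Fin d) k} (hp : p.IsHomogeneous n) :
    ((ιR k U d) p).IsHomogeneous n :=
  hp.rename_isHomogeneous

lemma πfun_hom : ∀ q, (πfun k U d q).IsHomogeneous 1 := by
  intro q
  rw [πfun]
  by_cases h : q.1 ∈ U
  · rw [dif_pos h]; exact isHomogeneous_X _ _
  · rw [dif_neg h]; exact isHomogeneous_zero _ _ _

lemma πR_hom {n : ℕ} {p : MvPolynomial (V × Fin d) k} (hp : p.IsHomogeneous n) :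
    ((πR k U d) p).IsHomogeneous n := by
  have h := hp.aeval (πfun k U d) (πfun_hom k U d)
  rw [one_mul] at h
  exact h

lemma ιR_LSS {G : SimpleGraph V} {s : ℕ} {x : MvPolynomial (↥U × Fin d) k}
    (hx : x ∈ (LSS k (SimpleGraph.induce U G) d) ^ s) :
    ιR k U d x ∈ (LSS k G d) ^ s := by
  have hmap : Ideal.map (ιR k U d) (LSS k (SimpleGraph.induce U G) d) ≤ LSS k G d := by
    rw [LSS, Ideal.map_span]
    refine Ideal.span_le.mpr ?_
    rintro y ⟨f, ⟨i, j, hadj, rfl⟩, rfl⟩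
    refine Ideal.subset_span ⟨(i : V), (j : V), hadj, ?_⟩
    rw [map_sum]
    refine Finset.sum_congr rfl fun ℓ _ => ?_
    rw [map_mul]
    simp [ιR, rename_X]
  have h1 : ιR k U d x ∈ Ideal.map (ιR k U d)
      ((LSS k (SimpleGraph.induce U G) d) ^ s) := Ideal.mem_map_of_mem _ hx
  rw [Ideal.map_pow] at h1
  exact Ideal.pow_right_mono hmap s h1

lemma πR_LSS {G : SimpleGraph V} {s : ℕ} {x : MvPolynomial (V × Fin d) k}
    (hx : x ∈ (LSS k G d) ^ s) :
    πR k U d x ∈ (LSS k (SimpleGraph.induce U G) d) ^ s := by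
  have hmap : Ideal.map (πR k U d) (LSS k G d)
      ≤ LSS k (SimpleGraph.induce U G) d := by
    rw [LSS, Ideal.map_span]
    refine Ideal.span_le.mpr ?_
    rintro y ⟨f, ⟨i, j, hadj, rfl⟩, rfl⟩
    by_cases hi : i ∈ U
    · by_cases hj : j ∈ U
      · refine Ideal.subset_span ⟨⟨i, hi⟩, ⟨j, hj⟩, hadj, ?_⟩
        rw [map_sum]
        refine Finset.sum_congr rfl fun ℓ _ => ?_
        rw [map_mul, πR_X_mem k U d hi, πR_X_mem k U d hj]
      · have hz : πR k U d (∑ ℓ : Fin d, X (i, ℓ) * X (j, ℓ)) = 0 := by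
          rw [map_sum]
          refine Finset.sum_eq_zero fun ℓ _ => ?_
          rw [map_mul, πR_X_not_mem k U d hj, mul_zero]
        rw [hz]
        exact SetLike.mem_coe.mpr (Submodule.zero_mem _)
    · have hz : πR k U d (∑ ℓ : Fin d, X (i, ℓ) * X (j, ℓ)) = 0 := by
        rw [map_sum]
        refine Finset.sum_eq_zero fun ℓ _ => ?_
        rw [map_mul, πR_X_not_mem k U d hi, zero_mul]
      rw [hz]
      exact SetLike.mem_coe.mpr (Submodule.zero_mem _)
  have h1 : πR k U d x ∈ Ideal.map (πR k U d) ((LSS k G d) ^ s) :=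
    Ideal.mem_map_of_mem _ hx
  rw [Ideal.map_pow] at h1
  exact Ideal.pow_right_mono hmap s h1

end BettiAux

namespace BettiAux

variable {k : Type*} [Field k] {σ : Type*} {I : Ideal (MvPolynomial σ k)}

lemma colA_comb (R : MinFreeRes I) (c : Fin (R.b 1)) :
    ∑ b, R.A 0 b c * R.g b = 0 := by
  have h := col_mem_range (R.A 0) c
  rw [← R.exact0] at h
  have h2 := LinearMap.mem_ker.mp h
  rw [Fintype.linearCombination_apply] at h2
  simpa [smul_eq_mul] using h2

lemma sum_mul_comb {n p q : Type*} [Fintype n] [Fintype p]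
    (M : Matrix n p (MvPolynomial σ k)) (N : Matrix p q (MvPolynomial σ k))
    (g : n → MvPolynomial σ k) (c : q) :
    ∑ r, (M * N) r c * g r = ∑ b, N b c * (∑ r, M r b * g r) := by
  simp only [Matrix.mul_apply, Finset.sum_mul, Finset.mul_sum]
  rw [Finset.sum_comm]
  exact Finset.sum_congr rfl fun b _ => Finset.sum_congr rfl fun r _ => by ring

end BettiAux

/-- Let `H` be an induced subgraph of `G`.  Then the graded Betti
numbers satisfy `β_{i,j}(S_H/L_H(d)ˢ) ≤ β_{i,j}(S/L_G(d)ˢ)` — for minimal graded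
free resolutions, `β_{i+1,j}` is the number of twists equal to `j` in homological
degree `i` of the resolution of the ideal (and `β_{0,0} = 1` for both quotients) —
and in particular `reg(S_H/L_H(d)ˢ) ≤ reg(S/L_G(d)ˢ)`. -/
theorem betti_induced_le (k : Type*) [Field k] {V : Type*}
    (G : SimpleGraph V) (U : Set V) (d : ℕ)
    (s : ℕ) (hs : 1 ≤ s)
    (RH : MinFreeRes ((LSS k (SimpleGraph.induce U G) d) ^ s))
    (RG : MinFreeRes ((LSS k G d) ^ s)) :
    (∀ i j : ℕ, Fintype.card {c : Fin (RH.b i) // RH.deg i c = j}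
        ≤ Fintype.card {c : Fin (RG.b i) // RG.deg i c = j}) ∧
    (∀ r : ℕ, (∀ i c, RG.deg i c ≤ (i + 1) + r) → (∀ i c, RH.deg i c ≤ (i + 1) + r)) := by
  classical
  set ι' := BettiAux.ιR k U d with hι'
  set π' := BettiAux.πR k U d with hπ'
  have hιhom : ∀ (n : ℕ) (p : MvPolynomial (↥U × Fin d) k),
      p.IsHomogeneous n → (ι' p).IsHomogeneous n :=
    fun n p hp => BettiAux.ιR_hom k U d hp
  have hπhom : ∀ (n : ℕ) (p : MvPolynomial (V × Fin d) k),
      p.IsHomogeneous n → (π' p).IsHomogeneous n :=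
    fun n p hp => BettiAux.πR_hom k U d hp
  -- lift of the resolution of the induced subgraph into the big one
  obtain ⟨φ, hφGM, hφaug, hφsq⟩ := BettiAux.lift_exists RG RH.b RH.deg
    (fun i => (RH.A i).map ι') (fun c => ι' (RH.g c))
    (fun i => (BettiAux.gm_A RH i).map ι' hιhom)
    (fun c => BettiAux.ιR_LSS k U d (by
      have hgc : RH.g c ∈ Ideal.span (Set.range RH.g) :=
        Ideal.subset_span (Set.mem_range_self c)
      rwa [RH.g_span] at hgc))
    (fun c => hιhom _ _ (RH.g_hom c))
    (fun c => by
      calc ∑ b, ((RH.A 0).map ι') b c * ι' (RH.g b)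
          = ι' (∑ b, RH.A 0 b c * RH.g b) := by
            rw [map_sum]
            exact Finset.sum_congr rfl fun b _ => by
              rw [Matrix.map_apply, ← map_mul]
        _ = 0 := by rw [BettiAux.colA_comb RH c, map_zero])
    (fun i => by rw [← Matrix.map_mul, BettiAux.A_mul_A RH i]
                 exact Matrix.map_zero _ (map_zero _))
  -- lift of the big resolution back onto the induced one
  obtain ⟨ψ, hψGM, hψaug, hψsq⟩ := BettiAux.lift_exists RH RG.b RG.deg
    (fun i => (RG.A i).map π') (fun c => π' (RG.g c))
    (fun i => (BettiAux.gm_A RG i).map π' hπhom)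
    (fun c => BettiAux.πR_LSS k U d (by
      have hgc : RG.g c ∈ Ideal.span (Set.range RG.g) :=
        Ideal.subset_span (Set.mem_range_self c)
      rwa [RG.g_span] at hgc))
    (fun c => hπhom _ _ (RG.g_hom c))
    (fun c => by
      calc ∑ b, ((RG.A 0).map π') b c * π' (RG.g b)
          = π' (∑ b, RG.A 0 b c * RG.g b) := by
            rw [map_sum]
            exact Finset.sum_congr rfl fun b _ => by
              rw [Matrix.map_apply, ← map_mul]
        _ = 0 := by rw [BettiAux.colA_comb RG c, map_zero])
    (fun i => by rw [← Matrix.map_mul, BettiAux.A_mul_A RG i]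
                 exact Matrix.map_zero _ (map_zero _))
  -- the composite chain self-map of RH
  have hGMθ : ∀ i, BettiAux.GM (RH.deg i) (RH.deg i) (ψ i * (φ i).map π') :=
    fun i => (hψGM i).mul ((hφGM i).map π' hπhom)
  have hmapid : ∀ i, ((RH.A i).map ι').map π' = RH.A i := by
    intro i
    rw [Matrix.map_map]
    refine Matrix.ext fun r c => ?_
    exact BettiAux.πR_ιR k U d (RH.A i r c)
  have hθaug : ∀ c, ∑ r, (ψ 0 * (φ 0).map π') r c * RH.g r = RH.g c := by
    intro c
    calc ∑ r, (ψ 0 * (φ 0).map π') r c * RH.g r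
        = ∑ b, ((φ 0).map π') b c * (∑ r, (ψ 0) r b * RH.g r) :=
          BettiAux.sum_mul_comb (ψ 0) ((φ 0).map π') RH.g c
      _ = ∑ b, π' (φ 0 b c * RG.g b) := by
          refine Finset.sum_congr rfl fun b _ => ?_
          rw [hψaug b, Matrix.map_apply, ← map_mul]
      _ = π' (∑ b, φ 0 b c * RG.g b) := by rw [map_sum]
      _ = π' (ι' (RH.g c)) := by rw [hφaug c]
      _ = RH.g c := BettiAux.πR_ιR k U d _
  have hθsq : ∀ i, RH.A i * (ψ (i+1) * (φ (i+1)).map π')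
      = (ψ i * (φ i).map π') * RH.A i := by
    intro i
    calc RH.A i * (ψ (i+1) * (φ (i+1)).map π')
        = (RH.A i * ψ (i+1)) * (φ (i+1)).map π' := by rw [Matrix.mul_assoc]
      _ = (ψ i * (RG.A i).map π') * (φ (i+1)).map π' := by rw [hψsq i]
      _ = ψ i * ((RG.A i * φ (i+1)).map π') := by
          rw [Matrix.mul_assoc, Matrix.map_mul]
      _ = ψ i * ((φ i * (RH.A i).map ι').map π') := by rw [hφsq i]
      _ = ψ i * ((φ i).map π' * RH.A i) := by rw [Matrix.map_mul, hmapid i]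
      _ = (ψ i * (φ i).map π') * RH.A i := by rw [Matrix.mul_assoc]
  have hinjθ := BettiAux.theta_inj RH (fun i => ψ i * (φ i).map π') hGMθ hθaug hθsq
  have hcard : ∀ i j : ℕ, Fintype.card {c : Fin (RH.b i) // RH.deg i c = j}
      ≤ Fintype.card {c : Fin (RG.b i) // RG.deg i c = j} := by
    intro i j
    set ε := (constantCoeff : MvPolynomial (↥U × Fin d) k →+* k) with hε
    have hP : ∀ r c, (((φ i).map π').map ε) r c ≠ 0 → RG.deg i r = RH.deg i c := by
      intro r c hne
      rw [Matrix.map_apply] at hne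
      have hentry : ((φ i).map π') r c ≠ 0 := by
        intro h0
        rw [h0, map_zero] at hne
        exact hne rfl
      rcases ((hφGM i).map π' hπhom) r c with ⟨hle, hhom⟩ | hz
      · have h0 := BettiAux.homog_zero_of_constCoeff hhom hne
        omega
      · exact absurd hz hentry
    have hQ : ∀ r c, ((ψ i).map ε) r c ≠ 0 → RH.deg i r = RG.deg i c := by
      intro r c hne
      rw [Matrix.map_apply] at hne
      have hentry : ψ i r c ≠ 0 := by
        intro h0
        rw [h0, map_zero] at hne
        exact hne rfl
      rcases (hψGM i) r c with ⟨hle, hhom⟩ | hz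
      · have h0 := BettiAux.homog_zero_of_constCoeff hhom hne
        omega
      · exact absurd hz hentry
    refine BettiAux.card_le_of_block (RH.deg i) (RG.deg i) _ _ hP hQ ?_ j
    intro v hv
    rw [← Matrix.map_mul] at hv
    exact hinjθ i v hv
  refine ⟨hcard, ?_⟩
  intro r hr i c
  by_contra hgt
  push_neg at hgt
  have h1 : 0 < Fintype.card {c' : Fin (RH.b i) // RH.deg i c' = RH.deg i c} :=
    Fintype.card_pos_iff.mpr ⟨⟨c, rfl⟩⟩
  have h2 := hcard i (RH.deg i c)
  have h3 : Fintype.card {c' : Fin (RG.b i) // RG.deg i c' = RH.deg i c} = 0 := by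
    rw [Fintype.card_eq_zero_iff]
    refine ⟨fun x => ?_⟩
    obtain ⟨c', hc'⟩ := x
    have := hr i c'
    omega
  omega
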